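/- Let m and n be positive integers with gcd(m, n) = 1. Then the characteristic polynomial of the pair of monomials x^m and x^n equals x^{(m−1)(n−1)}, i.e. χ_{x^m, x^n}(x) = x^{(m−1)(n−1)}. -/

import Mathlib

open Polynomial

/-- The resultant of two polynomials, defined as the determinant of their Sylvester matrix
(with coefficients listed in ascending order of degree). -/
noncomputable def resultant {R : Type*} [CommRing R] (f g : Polynomial R) : R :=
  Matrix.det (Matrix.of fun (i j : Fin (g.natDegree + f.natDegree)) =>
    if (i : ℕ) < g.natDegree then
      (if (i : ℕ) ≤ (j : ℕ) then f.coeff ((j : ℕ) - (i : ℕ)) else 0)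
    else
      (if (i : ℕ) - g.natDegree ≤ (j : ℕ) then g.coeff ((j : ℕ) - ((i : ℕ) - g.natDegree))
       else 0))

/-- For `p ∈ K[x]`, the polynomial `P(x,y) = (p(x) − p(y))/(x − y)`, viewed as a polynomial
in `y` with coefficients in `K[x]` (the outer variable is `y`). -/
noncomputable def divDiff {K : Type*} [Field K] (p : Polynomial K) :
    Polynomial (Polynomial K) :=
  (p.map (Polynomial.C : K →+* Polynomial K) - Polynomial.C p) /ₘ
    (Polynomial.X - Polynomial.C Polynomial.X)

/-- The characteristic polynomial `χ_{p,q} = Res_y(P(x,y), Q(x,y))` of the pair `p, q`. -/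
noncomputable def charPoly {K : Type*} [Field K] (p q : Polynomial K) : Polynomial K :=
  _root_.resultant (divDiff p) (divDiff q)

open Finset Matrix

section Band
variable {R : Type*} [CommRing R]

noncomputable def sPoly (K : Type*) [Field K] (a : ℕ) : Polynomial (Polynomial K) :=
  ∑ i ∈ Finset.range (a+1), (X : Polynomial (Polynomial K))^i * C ((X : Polynomial K)^(a-i))



def bandS (R : Type*) [CommRing R] (a b : ℕ) : Matrix (Fin (b + a)) (Fin (b + a)) R :=
  Matrix.of fun i j =>
    if (i : ℕ) < b then (if (i : ℕ) ≤ j ∧ (j : ℕ) ≤ i + a then 1 else 0)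
    else (if (i : ℕ) - b ≤ j ∧ (j : ℕ) ≤ i then 1 else 0)

lemma bandS_right_zero (a : ℕ) : bandS R a 0 = 1 := by
  ext i j
  simp only [bandS, Matrix.of_apply, Matrix.one_apply]
  have : ((i : ℕ) - 0 ≤ j ∧ (j : ℕ) ≤ i) ↔ i = j := by
    rw [Fin.ext_iff]; omega
  simp only [Nat.not_lt_zero, if_false, this]

lemma bandS_left_zero (b : ℕ) : bandS R 0 b = 1 := by
  ext i j
  have hi : (i : ℕ) < b := i.isLt
  simp only [bandS, Matrix.of_apply, Matrix.one_apply, if_pos hi]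
  have : ((i : ℕ) ≤ j ∧ (j : ℕ) ≤ i + 0) ↔ i = j := by
    rw [Fin.ext_iff]; omega
  rw [if_congr this rfl rfl]

lemma bandS_det_red (a' b : ℕ) :
    (bandS R (a' + b + 1) b).det = (bandS R a' b).det := by
  set a : ℕ := a' + b + 1 with ha
  clear_value a
  set L : Matrix (Fin (b + a)) (Fin (b + a)) R :=
    (1 : Matrix (Fin (b + a)) (Fin (b + a)) R) -
      Matrix.of (fun (i j : Fin (b + a)) => if (i : ℕ) < b ∧ (j : ℕ) = i + a then 1 else 0) with hL
  have hLtri : L.BlockTriangular id := by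
    intro i j hij
    have hij' : (j : ℕ) < (i : ℕ) := hij
    simp only [hL, Matrix.sub_apply, Matrix.one_apply, Matrix.of_apply]
    rw [if_neg (show ¬ i = j from fun hEq => by subst hEq; omega),
      if_neg (show ¬ ((i : ℕ) < b ∧ (j : ℕ) = (i : ℕ) + a) from by rintro ⟨-, hv⟩; omega)]
    ring
  have hLdet : L.det = 1 := by
    rw [Matrix.det_of_upperTriangular hLtri]
    apply Finset.prod_eq_one
    intro i _
    simp only [hL, Matrix.sub_apply, Matrix.one_apply_eq, Matrix.of_apply]
    rw [if_neg (show ¬ ((i : ℕ) < b ∧ (i : ℕ) = (i : ℕ) + a) from by rintro ⟨-, hv⟩; omega)]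
    ring
  set T : Matrix (Fin (b + a)) (Fin (b + a)) R :=
    Matrix.of (fun (i j : Fin (b + a)) =>
      if (i : ℕ) < b then (if (i : ℕ) ≤ j ∧ (j : ℕ) ≤ i + a' then 1 else 0)
      else (if (i : ℕ) - b ≤ j ∧ (j : ℕ) ≤ i then 1 else 0)) with hT
  have hmul : L * bandS R a b = T := by
    have hsplit : L * bandS R a b = bandS R a b -
        (Matrix.of (fun (i j : Fin (b + a)) => if (i : ℕ) < b ∧ (j : ℕ) = i + a then 1 else 0) :
          Matrix (Fin (b + a)) (Fin (b + a)) R) * bandS R a b := by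
      rw [hL, Matrix.sub_mul, Matrix.one_mul]
    rw [hsplit]
    ext i j
    rw [Matrix.sub_apply, Matrix.mul_apply]
    by_cases hi : (i : ℕ) < b
    · have hk : (i : ℕ) + a < b + a := by omega
      rw [Finset.sum_eq_single (⟨(i : ℕ) + a, hk⟩ : Fin (b + a))
        (fun k _ hkne => by
          have : ¬ ((i : ℕ) < b ∧ (k : ℕ) = (i : ℕ) + a) := by
            rintro ⟨-, hv⟩
            exact hkne (Fin.ext hv)
          simp only [Matrix.of_apply, if_neg this, zero_mul])
        (fun habs => absurd (Finset.mem_univ _) habs)]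
      simp only [hT, bandS, Matrix.of_apply, and_true]
      split_ifs <;> (first | ring1 | (exfalso; omega))
    · rw [Finset.sum_eq_zero (fun k _ => by
        simp only [Matrix.of_apply,
          if_neg (show ¬ ((i : ℕ) < b ∧ (k : ℕ) = (i : ℕ) + a) from fun h => hi h.1), zero_mul])]
      simp only [hT, bandS, Matrix.of_apply, if_neg hi, sub_zero]
  have hdetT : (bandS R a b).det = T.det := by
    rw [← hmul, Matrix.det_mul, hLdet, one_mul]
  rw [hdetT]
  have hpq : (b + a') + (b + 1) = b + a := by omega
  set e : (Fin (b + a') ⊕ Fin (b + 1)) ≃ Fin (b + a) := finSumFinEquiv.trans (finCongr hpq) with he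
  have hl : ∀ i : Fin (b + a'), ((e (Sum.inl i)) : ℕ) = (i : ℕ) := by
    intro i; simp [he, finCongr_apply]
  have hr : ∀ k : Fin (b + 1), ((e (Sum.inr k)) : ℕ) = b + a' + (k : ℕ) := by
    intro k; simp [he, finCongr_apply]
  set D : Matrix (Fin (b + 1)) (Fin (b + 1)) R :=
    Matrix.of (fun (k s : Fin (b + 1)) => if (s : ℕ) ≤ k then 1 else 0) with hD
  set Cb : Matrix (Fin (b + 1)) (Fin (b + a')) R :=
    Matrix.of (fun (k : Fin (b + 1)) (j : Fin (b + a')) =>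
      if (b + a' + (k : ℕ)) - b ≤ j ∧ (j : ℕ) ≤ b + a' + k then 1 else 0) with hCb
  have hblocks : T.submatrix e e = Matrix.fromBlocks (bandS R a' b) 0 Cb D := by
    ext i j
    rcases i with i | i <;> rcases j with j | j
    · simp only [Matrix.submatrix_apply, hT, Matrix.of_apply, Matrix.fromBlocks_apply₁₁,
        hl, hr, bandS]
    · simp only [Matrix.submatrix_apply, hT, Matrix.of_apply, Matrix.fromBlocks_apply₁₂,
        hl, hr, Matrix.zero_apply]
      have hiv : (i : ℕ) < b + a' := i.isLt
      split_ifs <;> (first | rfl | (exfalso; omega))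
    · simp only [Matrix.submatrix_apply, hT, Matrix.of_apply, Matrix.fromBlocks_apply₂₁,
        hl, hr, hCb]
      rw [if_neg (show ¬ (b + a' + (i : ℕ) < b) from by omega)]
    · simp only [Matrix.submatrix_apply, hT, Matrix.of_apply, Matrix.fromBlocks_apply₂₂,
        hl, hr, hD]
      rw [if_neg (show ¬ (b + a' + (i : ℕ) < b) from by omega)]
      split_ifs <;> (first | rfl | (exfalso; omega))
  have hD1 : D.det = 1 := by
    rw [Matrix.det_of_lowerTriangular D (fun i j hij => by
      have hij' : (i : ℕ) < (j : ℕ) := hij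
      simp only [hD, Matrix.of_apply]
      rw [if_neg (by omega)])]
    apply Finset.prod_eq_one
    intro i _
    simp only [hD, Matrix.of_apply, if_pos (le_refl _)]
  calc T.det = (T.submatrix e e).det := (Matrix.det_submatrix_equiv_self e T).symm
    _ = (bandS R a' b).det * D.det := by rw [hblocks, Matrix.det_fromBlocks_zero₁₂]
    _ = (bandS R a' b).det := by rw [hD1, mul_one]


lemma mod_aux (n x : ℕ) (hn : 0 < n) : (x + 1 % n) % n = (x + 1) % n := by
  rcases Nat.eq_or_lt_of_le hn with h1 | h1
  · simp [← h1]
  · rw [Nat.mod_eq_of_lt h1]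

lemma rotate_pow_val (M k : ℕ) : ∀ i : Fin (M+1),
    ((((finRotate (M+1))^k) i : Fin (M+1)) : ℕ) = ((i : ℕ) + k) % (M+1) := by
  induction k with
  | zero => intro i; simp [Nat.mod_eq_of_lt i.isLt]
  | succ k ih =>
      intro i
      rw [pow_succ', Equiv.Perm.mul_apply, finRotate_succ_apply]
      rw [Fin.val_add, Fin.val_one', ih i, Nat.mod_add_mod, mod_aux _ _ (Nat.succ_pos M)]
      show ((i : ℕ) + k + 1) % (M+1) = ((i : ℕ) + (k + 1)) % (M + 1)
      congr 1

lemma rot_matrix_det {R : Type*} [CommRing R] {M : ℕ}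
    (A B : Matrix (Fin (M+1)) (Fin (M+1)) R) (k : ℕ) (hEven : Even (M * k))
    (hAB : ∀ i j, B i j = A ⟨((i : ℕ) + k) % (M+1), Nat.mod_lt _ (Nat.succ_pos M)⟩ j) :
    B.det = A.det := by
  have hB : B = A.submatrix ((finRotate (M+1))^k) id := by
    ext i j
    rw [Matrix.submatrix_apply, hAB, id_eq]
    congr 1
    exact Fin.ext (rotate_pow_val M k i).symm
  rw [hB, Matrix.det_permute]
  have hsign : Equiv.Perm.sign ((finRotate (M+1))^k) = 1 := by
    rw [map_pow, sign_finRotate, Nat.add_sub_cancel, ← pow_mul, Even.neg_one_pow hEven]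
  rw [hsign]
  simp

lemma bandS_det_swap {R : Type*} [CommRing R] (a b : ℕ) (hpar : Even ((a + b - 1) * b)) :
    (bandS R b a).det = (bandS R a b).det := by
  rcases Nat.eq_zero_or_pos (a + b) with h0 | hpos
  · obtain ⟨rfl, rfl⟩ : a = 0 ∧ b = 0 := by omega
    rfl
  obtain ⟨M, hM⟩ : ∃ M, a + b = M + 1 := ⟨a + b - 1, by omega⟩
  rw [← Matrix.det_submatrix_equiv_self (finCongr hM.symm) (bandS R b a),
      ← Matrix.det_submatrix_equiv_self (finCongr (show M + 1 = b + a from by omega))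
        (bandS R a b)]
  apply rot_matrix_det _ _ b (show Even (M * b) from by
    have : M = a + b - 1 := by omega
    rw [this]; exact hpar)
  intro i j
  simp only [Matrix.submatrix_apply, bandS, Matrix.of_apply, finCongr_apply, Fin.coe_cast]
  have hiv : (i : ℕ) < M + 1 := i.isLt
  have hjv : (j : ℕ) < M + 1 := j.isLt
  rcases Nat.lt_or_ge (i : ℕ) a with hia | hia
  · have ht : ((i : ℕ) + b) % (M+1) = (i : ℕ) + b := Nat.mod_eq_of_lt (by omega)
    simp only [ht]
    split_ifs <;> (first | rfl | (exfalso; omega))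
  · have ht : ((i : ℕ) + b) % (M+1) = (i : ℕ) - a := by
      rw [show (i : ℕ) + b = (M+1) + ((i : ℕ) - a) from by omega, Nat.add_mod_left,
        Nat.mod_eq_of_lt (by omega)]
    simp only [ht]
    split_ifs <;> (first | rfl | (exfalso; omega))

lemma bandS_det {R : Type*} [CommRing R] :
    ∀ (N a b : ℕ), a + b ≤ N → Nat.Coprime (a+1) (b+1) → (bandS R a b).det = 1 := by
  intro N
  induction N with
  | zero =>
      intro a b hab _
      obtain ⟨rfl, rfl⟩ : a = 0 ∧ b = 0 := by omega
      rw [bandS_right_zero, Matrix.det_one]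
  | succ N ih =>
      intro a b hab hcop
      rcases Nat.eq_zero_or_pos b with rfl | hb
      · rw [bandS_right_zero, Matrix.det_one]
      rcases Nat.eq_zero_or_pos a with rfl | ha
      · rw [bandS_left_zero, Matrix.det_one]
      have hpar : ¬ (Odd a ∧ Odd b) := by
        rintro ⟨hoa, hob⟩
        have h2a : 2 ∣ a + 1 := by rcases hoa with ⟨t, rfl⟩; exact ⟨t+1, by ring⟩
        have h2b : 2 ∣ b + 1 := by rcases hob with ⟨t, rfl⟩; exact ⟨t+1, by ring⟩
        have := Nat.dvd_gcd h2a h2b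
        rw [Nat.Coprime] at hcop
        omega
      rcases lt_trichotomy a b with hlt | heq | hgt
      · -- swap then reduce
        have hev : Even ((b + a - 1) * a) := by
          rcases Nat.even_or_odd a with hea | hoa
          · exact Nat.even_mul.mpr (Or.inr hea)
          · have heb : Even b := by
              rcases Nat.even_or_odd b with h | h
              · exact h
              · exact absurd ⟨hoa, h⟩ hpar
            refine Nat.even_mul.mpr (Or.inl ?_)
            rw [Nat.even_iff] at heb ⊢
            rw [Nat.odd_iff] at hoa
            omega
        have hswap : (bandS R a b).det = (bandS R b a).det := bandS_det_swap b a hev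
        rw [hswap]
        obtain ⟨b', rfl⟩ : ∃ b', b = b' + a + 1 := ⟨b - a - 1, by omega⟩
        rw [bandS_det_red]
        exact ih b' a (by omega) (by
          have := (Nat.coprime_sub_self_left (m := a+1) (n := b'+a+1+1) (by omega)).mpr hcop.symm
          have h2 : b' + a + 1 + 1 - (a + 1) = b' + 1 := by omega
          rwa [h2] at this)
      · exfalso
        rw [Nat.Coprime, heq, Nat.gcd_self] at hcop
        omega
      · obtain ⟨a', rfl⟩ : ∃ a', a = a' + b + 1 := ⟨a - b - 1, by omega⟩
        rw [bandS_det_red]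
        exact ih a' b (by omega) (by
          have := (Nat.coprime_sub_self_left (m := b+1) (n := a'+b+1+1) (by omega)).mpr hcop
          have h2 : a' + b + 1 + 1 - (b + 1) = a' + 1 := by omega
          rwa [h2] at this)

end Band

lemma divDiff_X_pow {K : Type*} [Field K] (a : ℕ) :
    divDiff ((X : Polynomial K)^(a+1)) = sPoly K a := by
  unfold divDiff sPoly
  rw [Polynomial.map_pow, map_X, C_pow, ← geom_sum₂_mul (X : Polynomial (Polynomial K)) (C X) (a+1)]
  rw [mul_comm, mul_divByMonic_cancel_left _ (monic_X_sub_C _)]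
  refine Finset.sum_congr rfl fun i _ => ?_
  rw [← C_pow]
  congr 2

lemma sPoly_coeff {K : Type*} [Field K] (a k : ℕ) :
    (sPoly K a).coeff k = if k < a + 1 then (X : Polynomial K)^(a-k) else 0 := by
  unfold sPoly
  rw [finset_sum_coeff]
  have : ∀ i ∈ Finset.range (a+1),
      ((X : Polynomial (Polynomial K))^i * C ((X : Polynomial K)^(a-i))).coeff k
        = if i = k then (X : Polynomial K)^(a-i) else 0 := by
    intro i _
    rw [mul_comm, C_mul_X_pow_eq_monomial, coeff_monomial]
  rw [Finset.sum_congr rfl this, Finset.sum_ite_eq' (Finset.range (a+1)) k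
    (fun i => (X : Polynomial K)^(a-i))]
  simp [Finset.mem_range]

lemma sPoly_natDegree {K : Type*} [Field K] (a : ℕ) : (sPoly K a).natDegree = a := by
  refine le_antisymm ?_ ?_
  · rw [natDegree_le_iff_coeff_eq_zero]
    intro k hk
    rw [sPoly_coeff, if_neg (by omega)]
  · apply le_natDegree_of_ne_zero
    rw [sPoly_coeff, if_pos (by omega), Nat.sub_self, pow_zero]
    exact one_ne_zero

lemma det_sylvester (K : Type*) [Field K] (a b : ℕ) (h : Nat.Coprime (a+1) (b+1)) :
    Matrix.det (Matrix.of fun (i j : Fin (b + a)) =>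
      if (i : ℕ) < b then
        (if (i : ℕ) ≤ (j : ℕ) then (sPoly K a).coeff ((j : ℕ) - (i : ℕ)) else 0)
      else
        (if (i : ℕ) - b ≤ (j : ℕ) then (sPoly K b).coeff ((j : ℕ) - ((i : ℕ) - b)) else 0))
      = (X : Polynomial K) ^ (a * b) := by
  have hband : (bandS (Polynomial K) a b).det = 1 := bandS_det (a+b) a b le_rfl h
  set MM : Matrix (Fin (b + a)) (Fin (b + a)) (Polynomial K) :=
    Matrix.of (fun (i j : Fin (b + a)) =>
      if (i : ℕ) < b then
        (if (i : ℕ) ≤ (j : ℕ) then (sPoly K a).coeff ((j : ℕ) - (i : ℕ)) else 0)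
      else
        (if (i : ℕ) - b ≤ (j : ℕ) then (sPoly K b).coeff ((j : ℕ) - ((i : ℕ) - b)) else 0))
    with hMM
  have key : Matrix.det (Matrix.of fun (i j : Fin (b + a)) =>
        (X : Polynomial K)^(j : ℕ) * MM i j)
      = Matrix.det (Matrix.of fun (i j : Fin (b + a)) =>
        (X : Polynomial K)^((i : ℕ) + if (i : ℕ) < b then a else 0)
          * bandS (Polynomial K) a b i j) := by
    congr 1
    apply Matrix.ext
    intro i j
    simp only [Matrix.of_apply, hMM, bandS, sPoly_coeff]
    split_ifs <;>
      (first
        | (rw [mul_zero, mul_zero])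
        | (rw [mul_zero, mul_one]; exfalso; omega)
        | (rw [mul_one, ← pow_add]; congr 1; omega)
        | (exfalso; omega))
  rw [Matrix.det_mul_row (fun j : Fin (b + a) => (X : Polynomial K)^(j : ℕ)) MM,
    Matrix.det_mul_column (fun i : Fin (b + a) =>
      (X : Polynomial K)^((i : ℕ) + if (i : ℕ) < b then a else 0)) (bandS (Polynomial K) a b),
    hband, mul_one] at key
  have hsplitpow : (∏ i : Fin (b + a),
        (X : Polynomial K)^((i : ℕ) + if (i : ℕ) < b then a else 0))
      = (∏ i : Fin (b + a), (X : Polynomial K)^(i : ℕ)) * X ^ (a * b) := by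
    have e1 : (∏ i : Fin (b + a), (X : Polynomial K)^((i : ℕ) + if (i : ℕ) < b then a else 0))
        = ∏ i : Fin (b + a), (X : Polynomial K)^(i : ℕ) * X^(if (i : ℕ) < b then a else 0) :=
      Finset.prod_congr rfl (fun i _ => pow_add X (i : ℕ) _)
    rw [e1, Finset.prod_mul_distrib]
    congr 1
    rw [Finset.prod_pow_eq_pow_sum]
    congr 1
    rw [Fin.sum_univ_eq_sum_range (fun i => if i < b then a else 0) (b + a),
      Finset.range_eq_Ico, ← Finset.sum_Ico_consecutive _ (Nat.zero_le b) (Nat.le_add_right b a),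
      Finset.sum_congr rfl (fun i hi => if_pos ((Finset.mem_Ico.mp hi).2)),
      Finset.sum_eq_zero (fun i hi => if_neg (by
        have := (Finset.mem_Ico.mp hi).1
        omega)),
      add_zero, Finset.sum_const, Nat.card_Ico, Nat.sub_zero, smul_eq_mul, mul_comm]
  rw [hsplitpow] at key
  have hne : (∏ i : Fin (b + a), (X : Polynomial K)^(i : ℕ)) ≠ 0 :=
    Finset.prod_ne_zero_iff.mpr (fun i _ => pow_ne_zero _ X_ne_zero)
  exact mul_left_cancel₀ hne key

theorem charPoly_monomials {K : Type*} [Field K] [IsAlgClosed K] [CharZero K]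
    (m n : ℕ) (hm : 0 < m) (hn : 0 < n) (h : Nat.Coprime m n) :
    charPoly ((Polynomial.X : Polynomial K) ^ m) ((Polynomial.X : Polynomial K) ^ n) =
      Polynomial.X ^ ((m - 1) * (n - 1)) := by
  obtain ⟨a, rfl⟩ : ∃ a, m = a + 1 := ⟨m - 1, by omega⟩
  obtain ⟨b, rfl⟩ : ∃ b, n = b + 1 := ⟨n - 1, by omega⟩
  simp only [Nat.add_sub_cancel]
  unfold charPoly _root_.resultant
  rw [divDiff_X_pow a, divDiff_X_pow b, sPoly_natDegree, sPoly_natDegree]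
  exact det_sylvester K a b h
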